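/- arXiv:1710.00638 — 9 statements merged into one kernel-verified Lean document; each statement's English description precedes it below -/
import Mathlib

section
/- Let n ≥ 1, let R be a commutative ring, let x_1, …, x_n ∈ R and let a = (a_1, a_2, …) be any sequence in R. Then the n×n determinant det_{1≤i,j≤n} ( (x_i|a)^{n−j} ) equals the Vandermonde product ∏_{1≤i<j≤n} (x_i − x_j); in particular it is independent of the sequence a. -/
open Finset

noncomputable def geom {R : Type*} [CommRing R] (x : R) : PowerSeries R :=
  PowerSeries.mk fun k => x ^ k

noncomputable def lin {R : Type*} [CommRing R] (a : R) : PowerSeries R :=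
  1 + PowerSeries.C a * PowerSeries.X

noncomputable def facpow {R : Type*} [CommRing R] (x : R) (a : ℕ → R) (m : ℕ) : R :=
  ∏ j ∈ Finset.range m, (x + a (j + 1))

noncomputable def hgl {R : Type*} [CommRing R] {n : ℕ} (x : Fin n → R) (a : ℕ → R) (m : ℤ) : R :=
  if 0 ≤ m then
    PowerSeries.coeff m.toNat
      ((∏ i, geom (x i)) * ∏ j ∈ Finset.range (n + m.toNat - 1), lin (a (j + 1)))
  else 0

noncomputable def hsp {R : Type*} [CommRing R] {n : ℕ} (x : Fin n → Rˣ) (a : ℕ → R) (m : ℤ) : R :=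
  if 0 ≤ m then
    PowerSeries.coeff m.toNat
      ((∏ i, geom ((x i : R)) * geom (((x i)⁻¹ : Rˣ) : R)) *
        ∏ j ∈ Finset.range (n + m.toNat - 1), lin (a (j + 1)))
  else 0

noncomputable def hoo {R : Type*} [CommRing R] {n : ℕ} (x : Fin n → Rˣ) (a : ℕ → R) (m : ℤ) : R :=
  if 0 ≤ m then
    PowerSeries.coeff m.toNat
      ((1 + PowerSeries.X) * (∏ i, geom ((x i : R)) * geom (((x i)⁻¹ : Rˣ) : R)) *
        ∏ j ∈ Finset.range (n + m.toNat - 1), lin (a (j + 1)))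
  else 0

noncomputable def heo {R : Type*} [CommRing R] {n : ℕ} (x : Fin n → Rˣ) (a : ℕ → R) (m : ℤ) : R :=
  if 0 ≤ m then
    if h : n = 1 then
      (PowerSeries.coeff m.toNat
        ((geom ((x ⟨0, by omega⟩ : Rˣ) : R) + geom (((x ⟨0, by omega⟩)⁻¹ : Rˣ) : R)) *
          ∏ j ∈ Finset.range m.toNat, lin (a (j + 1))))
        - (if m = 0 then 1 else 0)
    else
      PowerSeries.coeff m.toNat
        ((1 - PowerSeries.X ^ 2) * (∏ i, geom ((x i : R)) * geom (((x i)⁻¹ : Rˣ) : R)) *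
          ∏ j ∈ Finset.range (n + m.toNat - 1), lin (a (j + 1)))
  else 0

noncomputable def heod {R : Type*} [CommRing R] {n : ℕ} (x : Fin n → Rˣ) (a : ℕ → R) (m : ℤ) : R :=
  if 0 < m then
    if h : 0 < n then
      PowerSeries.coeff m.toNat
        ((geom ((x ⟨0, h⟩ : Rˣ) : R) - geom (((x ⟨0, h⟩)⁻¹ : Rˣ) : R)) *
          (∏ i ∈ Finset.univ.filter (fun i : Fin n => i ≠ ⟨0, h⟩),
            geom ((x i : R)) * geom (((x i)⁻¹ : Rˣ) : R)) *
          ∏ j ∈ Finset.range (n + m.toNat - 1), lin (a (j + 1)))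
    else 0
  else 0

lemma prod_pairs_rev {R : Type*} [CommMonoid R] (n : ℕ) (f : Fin n → Fin n → R) :
    (∏ i : Fin n, ∏ j ∈ Finset.Ioi i, f (Fin.rev j) (Fin.rev i)) =
      ∏ i : Fin n, ∏ j ∈ Finset.Ioi i, f i j := by
  rw [Finset.prod_sigma', Finset.prod_sigma']
  refine Finset.prod_nbij' (fun p => ⟨Fin.rev p.2, Fin.rev p.1⟩)
    (fun p => ⟨Fin.rev p.2, Fin.rev p.1⟩) ?_ ?_ ?_ ?_ ?_ <;>
    simp [Fin.rev_lt_rev]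

/-- the `a`-independent factorial Vandermonde determinant. -/
theorem factorial_vandermonde {R : Type*} [CommRing R] (n : ℕ) (hn : 1 ≤ n)
    (x : Fin n → R) (a : ℕ → R) :
    Matrix.det (Matrix.of fun i j : Fin n => facpow (x i) a (n - 1 - (j : ℕ))) =
      ∏ i : Fin n, ∏ j ∈ Finset.Ioi i, (x i - x j) := by
  rcases subsingleton_or_nontrivial R with hR | hR
  · exact Subsingleton.elim _ _
  set p : Fin n → Polynomial R := fun k =>
    ∏ t ∈ Finset.range (k : ℕ), (Polynomial.X + Polynomial.C (a (t + 1))) with hp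
  have hmonic : ∀ k, (p k).Monic := fun k =>
    Polynomial.monic_prod_of_monic _ _ fun t _ => Polynomial.monic_X_add_C _
  have hdeg : ∀ k : Fin n, (p k).natDegree = (k : ℕ) := by
    intro k
    rw [hp, Polynomial.natDegree_prod_of_monic _ _ fun t _ => Polynomial.monic_X_add_C _]
    simp [Polynomial.natDegree_X]
  have heval : ∀ (y : R) (k : Fin n), (p k).eval y = facpow y a (k : ℕ) := by
    intro y k
    simp [hp, facpow, Polynomial.eval_prod]
  have hM : (Matrix.of fun i j : Fin n => facpow (x i) a (n - 1 - (j : ℕ))) =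
      (Matrix.of fun i j : Fin n => (p j).eval (x (Fin.rev i))).submatrix
        Fin.revPerm Fin.revPerm := by
    ext i j
    simp [Matrix.submatrix_apply, heval, Fin.val_rev]
    congr 1
    omega
  rw [hM, Matrix.det_submatrix_equiv_self,
    ← Matrix.det_eval_matrixOfPolynomials_eq_det_vandermonde (fun i => x (Fin.rev i)) p hdeg hmonic,
    Matrix.det_vandermonde]
  exact prod_pairs_rev n fun i j => x i - x j
end

section
/- Let n ≥ 1, let R be a commutative ring, let x_1, …, x_n be invertible elements of R with x̄_i := x_i^{−1}, and let a = (a_1, a_2, …) be any sequence in R. Then det_{1≤i,j≤n} ( x_i·(x_i|a)^{n−j} − x̄_i·(x̄_i|a)^{n−j} ) = ∏_{i=1}^n (x_i − x̄_i) · ∏_{1≤i<j≤n} (x_i + x̄_i − x_j − x̄_j); in particular this determinant is independent of the sequence a. -/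
open Finset

open Polynomial

noncomputable def QQ {R : Type*} [CommRing R] (a : ℕ → R) : ℕ → Polynomial R × Polynomial R
  | 0 => (1, 0)
  | m + 1 => ((X + C (a (m + 1))) * (QQ a m).1 - (QQ a m).2,
      (QQ a m).1 + C (a (m + 1)) * (QQ a m).2)

lemma QQ_deg {R : Type*} [CommRing R] [Nontrivial R] (a : ℕ → R) (m : ℕ) :
    (QQ a m).1.Monic ∧ (QQ a m).1.degree = m ∧ (QQ a m).2.degree < m := by
  induction m with
  | zero => refine ⟨monic_one, degree_one, ?_⟩; simp [QQ, degree_zero]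
  | succ m ih =>
    obtain ⟨h1, h2, h3⟩ := ih
    have hm : ((X + C (a (m + 1))) * (QQ a m).1).Monic := (monic_X_add_C _).mul h1
    have hd : ((X + C (a (m + 1))) * (QQ a m).1).degree = ((m + 1 : ℕ) : WithBot ℕ) := by
      rw [h1.degree_mul, degree_X_add_C, h2]
      norm_cast; omega
    have hlt : (-(QQ a m).2).degree < ((X + C (a (m + 1))) * (QQ a m).1).degree := by
      rw [degree_neg, hd]
      exact h3.trans (by exact_mod_cast WithBot.coe_lt_coe.2 (Nat.lt_succ_self m))
    constructor
    · show ((X + C (a (m + 1))) * (QQ a m).1 - (QQ a m).2).Monic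
      rw [sub_eq_add_neg]
      exact hm.add_of_left hlt
    constructor
    · show ((X + C (a (m + 1))) * (QQ a m).1 - (QQ a m).2).degree = ((m + 1 : ℕ) : WithBot ℕ)
      rw [sub_eq_add_neg, degree_add_eq_left_of_degree_lt hlt, hd]
    · show ((QQ a m).1 + C (a (m + 1)) * (QQ a m).2).degree < (m + 1 : ℕ)
      have : ((QQ a m).1 + C (a (m + 1)) * (QQ a m).2).degree ≤ m := by
        apply (degree_add_le _ _).trans
        apply max_le h2.le
        rw [← smul_eq_C_mul]
        exact (degree_smul_le _ _).trans h3.le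
      exact this.trans_lt (by exact_mod_cast WithBot.coe_lt_coe.2 (Nat.lt_succ_self m))

lemma QQ_eval {R : Type*} [CommRing R] (a : ℕ → R) (x : Rˣ) (m : ℕ) :
    ((x : R) * facpow (x : R) a m - ((x⁻¹ : Rˣ) : R) * facpow ((x⁻¹ : Rˣ) : R) a m
      = ((x : R) - ((x⁻¹ : Rˣ) : R)) * (QQ a m).1.eval ((x : R) + ((x⁻¹ : Rˣ) : R)))
    ∧ (facpow (x : R) a m - facpow ((x⁻¹ : Rˣ) : R) a m
      = ((x : R) - ((x⁻¹ : Rˣ) : R)) * (QQ a m).2.eval ((x : R) + ((x⁻¹ : Rˣ) : R))) := by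
  have h1 : (x : R) * ((x⁻¹ : Rˣ) : R) = 1 := x.mul_inv
  induction m with
  | zero => simp [facpow, QQ]
  | succ m ih =>
    have hf : ∀ y : R, facpow y a (m + 1) = facpow y a m * (y + a (m + 1)) := fun y =>
      Finset.prod_range_succ _ _
    rw [hf, hf]
    constructor
    · show _ = _ * Polynomial.eval _ ((X + C (a (m + 1))) * (QQ a m).1 - (QQ a m).2)
      simp only [eval_sub, eval_mul, eval_add, eval_X, eval_C]
      linear_combination ((x : R) + ((x⁻¹ : Rˣ) : R) + a (m + 1)) * ih.1 - ih.2
        + (facpow ((x⁻¹ : Rˣ) : R) a m - facpow (x : R) a m) * h1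
    · show _ = _ * Polynomial.eval _ ((QQ a m).1 + C (a (m + 1)) * (QQ a m).2)
      simp only [eval_add, eval_mul, eval_C]
      linear_combination ih.1 + a (m + 1) * ih.2

lemma rev_prod {R : Type*} [CommRing R] {n : ℕ} (w : Fin n → R) :
    ∏ i : Fin n, ∏ j ∈ Finset.Ioi i, (w (Fin.rev j) - w (Fin.rev i)) =
      ∏ i : Fin n, ∏ j ∈ Finset.Ioi i, (w i - w j) := by
  rw [Finset.prod_sigma', Finset.prod_sigma']
  refine Finset.prod_nbij' (fun p : (_ : Fin n) × Fin n => ⟨Fin.rev p.2, Fin.rev p.1⟩)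
    (fun p : (_ : Fin n) × Fin n => ⟨Fin.rev p.2, Fin.rev p.1⟩) ?_ ?_ ?_ ?_ ?_
  · intro p hp
    simp only [Finset.mem_sigma, Finset.mem_univ, Finset.mem_Ioi, true_and] at hp ⊢
    exact Fin.rev_lt_rev.2 hp
  · intro p hp
    simp only [Finset.mem_sigma, Finset.mem_univ, Finset.mem_Ioi, true_and] at hp ⊢
    exact Fin.rev_lt_rev.2 hp
  · intro p hp; simp [Fin.rev_rev]
  · intro p hp; simp [Fin.rev_rev]
  · intro p hp; simp [Fin.rev_rev]

/-- symplectic factorial denominator identity. -/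
theorem factorial_sp_denominator {R : Type*} [CommRing R] (n : ℕ) (hn : 1 ≤ n)
    (x : Fin n → Rˣ) (a : ℕ → R) :
    Matrix.det (Matrix.of fun i j : Fin n =>
        (x i : R) * facpow ((x i : R)) a (n - 1 - (j : ℕ))
          - (((x i)⁻¹ : Rˣ) : R) * facpow ((((x i)⁻¹ : Rˣ) : R)) a (n - 1 - (j : ℕ))) =
      (∏ i : Fin n, ((x i : R) - (((x i)⁻¹ : Rˣ) : R))) *
        ∏ i : Fin n, ∏ j ∈ Finset.Ioi i,
          ((x i : R) + (((x i)⁻¹ : Rˣ) : R) - (x j : R) - (((x j)⁻¹ : Rˣ) : R)) := by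
  rcases subsingleton_or_nontrivial R with hR | hR
  · exact Subsingleton.elim _ _
  set u : Fin n → R := fun i => (x i : R) + (((x i)⁻¹ : Rˣ) : R) with hu
  have hM : (Matrix.of fun i j : Fin n =>
        (x i : R) * facpow ((x i : R)) a (n - 1 - (j : ℕ))
          - (((x i)⁻¹ : Rˣ) : R) * facpow ((((x i)⁻¹ : Rˣ) : R)) a (n - 1 - (j : ℕ))) =
      Matrix.of (fun i j : Fin n => ((x i : R) - (((x i)⁻¹ : Rˣ) : R)) *
        (Matrix.of fun i j : Fin n => (QQ a (n - 1 - (j : ℕ))).1.eval (u i)) i j) := by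
    ext i j
    exact (QQ_eval a (x i) _).1
  rw [hM, Matrix.det_mul_column]
  congr 1
  have hB := Matrix.det_eval_matrixOfPolynomials_eq_det_vandermonde
    (fun i : Fin n => u (Fin.rev i)) (fun i : Fin n => (QQ a (i : ℕ)).1)
    (fun i => natDegree_eq_of_degree_eq_some (QQ_deg a (i : ℕ)).2.1)
    (fun i => (QQ_deg a (i : ℕ)).1)
  have hsub : (Matrix.of fun i j : Fin n => (QQ a (n - 1 - (j : ℕ))).1.eval (u i)) =
      (Matrix.of fun i j : Fin n => (QQ a (j : ℕ)).1.eval (u (Fin.rev i))).submatrix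
        Fin.revPerm Fin.revPerm := by
    ext i j
    simp only [Matrix.submatrix_apply, Matrix.of_apply, Fin.revPerm_apply, Fin.rev_rev]
    rw [Fin.val_rev]
    congr 3
    omega
  rw [hsub, Matrix.det_submatrix_equiv_self, ← hB, Matrix.det_vandermonde]
  rw [rev_prod u]
  exact Finset.prod_congr rfl fun i _ => Finset.prod_congr rfl fun j _ => by rw [hu]; ring
end

section
/- Let n ≥ 1, let R be a commutative ring, let x_1, …, x_n be invertible elements of R with x̄_i := x_i^{−1}, and let a = (a_1, a_2, …) be any sequence in R. Then det_{1≤i,j≤n} ( (x_i|a)^{n−j} + (x̄_i|a)^{n−j} ) = 2 · ∏_{1≤i<j≤n} (x_i + x̄_i − x_j − x̄_j); in particular this determinant is independent of the sequence a. -/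
open Finset

section Aux
open Polynomial

-- Degree/monicity of Dickson polynomials D_n = dickson 1 1 n
lemma dickson_deg_aux {R : Type*} [CommRing R] [Nontrivial R] : ∀ n : ℕ,
    (dickson 1 (1:R) n).degree ≤ (n : ℕ) ∧
    (dickson 1 (1:R) (n+1)).Monic ∧
    (dickson 1 (1:R) (n+1)).degree = ((n+1 : ℕ) : WithBot ℕ) := by
  have h0 : dickson 1 (1:R) 0 = C 2 := by
    rw [dickson_zero]; norm_num
    rw [map_ofNat]
  intro n
  induction n with
  | zero =>
    refine ⟨by rw [h0]; exact degree_C_le, ?_, ?_⟩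
    · simpa using (monic_X : Monic (X : R[X]))
    · simpa using (degree_X : (X : R[X]).degree = 1)
  | succ n ih =>
    obtain ⟨hd, hm, hdeg⟩ := ih
    have hXm : Monic (X * dickson 1 (1:R) (n+1)) := monic_X.mul hm
    have hXdeg : (X * dickson 1 (1:R) (n+1)).degree = ((n+2 : ℕ) : WithBot ℕ) := by
      rw [hm.degree_mul, degree_X, hdeg]
      push_cast
      ring
    have hlt : (C (1:R) * dickson 1 (1:R) n).degree < (X * dickson 1 (1:R) (n+1)).degree := by
      rw [hXdeg]
      have hCle : (C (1:R) * dickson 1 (1:R) n).degree ≤ (n : ℕ) := by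
        refine le_trans (degree_mul_le _ _) (le_trans (add_le_add degree_C_le le_rfl) ?_)
        simpa using hd
      refine lt_of_le_of_lt hCle ?_
      exact_mod_cast Nat.lt_succ_of_lt (Nat.lt_succ_self n)
    have heq : dickson 1 (1:R) (n+2)
        = X * dickson 1 (1:R) (n+1) - C 1 * dickson 1 (1:R) n := by
      rw [dickson_add_two]
    refine ⟨le_of_eq hdeg, ?_, ?_⟩
    · rw [heq]; exact hXm.sub_of_left hlt
    · rw [heq, degree_sub_eq_left_of_degree_lt hlt, hXdeg]

-- corollaries
lemma dickson_degree_le {R : Type*} [CommRing R] [Nontrivial R] (k : ℕ) :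
    (dickson 1 (1:R) k).degree ≤ (k : ℕ) := (dickson_deg_aux k).1

lemma dickson_monic {R : Type*} [CommRing R] [Nontrivial R] (k : ℕ) (hk : 1 ≤ k) :
    (dickson 1 (1:R) k).Monic := by
  obtain ⟨m, rfl⟩ := Nat.exists_eq_add_of_le hk
  simpa [add_comm] using (dickson_deg_aux (R := R) m).2.1

lemma dickson_natDegree {R : Type*} [CommRing R] [Nontrivial R] (k : ℕ) (hk : 1 ≤ k) :
    (dickson 1 (1:R) k).natDegree = k := by
  obtain ⟨m, rfl⟩ := Nat.exists_eq_add_of_le hk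
  have := (dickson_deg_aux (R := R) m).2.2
  rw [add_comm 1 m] at *
  exact natDegree_eq_of_degree_eq_some this

section Q
variable {R : Type*} [CommRing R] (a : ℕ → R)

/-- auxiliary factorial polynomial -/
noncomputable def Fpoly (m : ℕ) : R[X] := ∏ t ∈ Finset.range m, (X + C (a (t+1)))

/-- auxiliary "dicksonized" factorial polynomial -/
noncomputable def Qpoly (m : ℕ) : R[X] :=
  ∑ k ∈ Finset.range (m+1), C ((Fpoly a m).coeff k) * dickson 1 1 k

lemma Fpoly_monic (m : ℕ) : (Fpoly a m).Monic :=
  monic_prod_of_monic _ _ fun i _ => monic_X_add_C _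

lemma Fpoly_natDegree_le (m : ℕ) : (Fpoly a m).natDegree ≤ m := by
  refine le_trans (natDegree_prod_le _ _) ?_
  have h1 : ∀ i ∈ Finset.range m, (X + C (a (i+1))).natDegree ≤ 1 := fun i _ =>
    le_trans (natDegree_add_le _ _) (by simp [natDegree_X_le])
  have h2 := Finset.sum_le_sum h1
  simpa using h2

lemma Fpoly_natDegree [Nontrivial R] (m : ℕ) : (Fpoly a m).natDegree = m := by
  rw [Fpoly, natDegree_prod_of_monic _ _ fun i _ => monic_X_add_C _]
  simp [natDegree_X_add_C]

lemma Fpoly_eval (m : ℕ) (u : R) : (Fpoly a m).eval u = facpow u a m := by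
  simp [Fpoly, facpow, eval_prod]

lemma Qpoly_eval (m : ℕ) (u v : R) (h : u * v = 1) :
    (Qpoly a m).eval (u + v) = facpow u a m + facpow v a m := by
  have hdeg : (Fpoly a m).natDegree < m + 1 := Nat.lt_succ_of_le (Fpoly_natDegree_le a m)
  rw [Qpoly, eval_finset_sum]
  simp only [eval_mul, eval_C, dickson_one_one_eval_add_inv u v h]
  rw [← Fpoly_eval a m u, ← Fpoly_eval a m v, eval_eq_sum_range' hdeg, eval_eq_sum_range' hdeg,
    ← Finset.sum_add_distrib]
  congr 1; ext k; ring

lemma Qpoly_zero : Qpoly a 0 = C 2 := by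
  have h0 : dickson 1 (1:R) 0 = C 2 := by rw [dickson_zero]; norm_num; rw [map_ofNat]
  simp [Qpoly, Fpoly, h0]

lemma Qpoly_degree_le [Nontrivial R] (m : ℕ) : (Qpoly a m).degree ≤ (m : ℕ) := by
  refine le_trans (degree_sum_le _ _) ?_
  rw [Finset.sup_le_iff]
  intro k hk
  rw [Finset.mem_range] at hk
  refine le_trans (degree_mul_le _ _) (le_trans (add_le_add degree_C_le (dickson_degree_le k)) ?_)
  simpa using Nat.lt_succ_iff.mp hk

lemma Qpoly_natDegree_le [Nontrivial R] (m : ℕ) : (Qpoly a m).natDegree ≤ m :=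
  natDegree_le_of_degree_le (Qpoly_degree_le a m)

lemma Qpoly_coeff_top [Nontrivial R] (m : ℕ) (hm : 1 ≤ m) : (Qpoly a m).coeff m = 1 := by
  rw [Qpoly, finset_sum_coeff]
  rw [Finset.sum_eq_single m]
  · have hd1 : (dickson 1 (1:R) m).coeff m = 1 := by
      have h := (dickson_monic (R := R) m hm).coeff_natDegree
      rwa [dickson_natDegree (R := R) m hm] at h
    have hF1 : (Fpoly a m).coeff m = 1 := by
      have h := (Fpoly_monic a m).coeff_natDegree
      rwa [Fpoly_natDegree a m] at h
    rw [coeff_C_mul, hd1, hF1, mul_one]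
  · intro k hk hne
    rw [Finset.mem_range, Nat.lt_succ_iff] at hk
    have hz : (dickson 1 (1:R) k).coeff m = 0 :=
      coeff_eq_zero_of_degree_lt
        (lt_of_le_of_lt (dickson_degree_le k) (by exact_mod_cast lt_of_le_of_ne hk hne))
    rw [coeff_C_mul, hz, mul_zero]
  · intro h; exact absurd (Finset.self_mem_range_succ m) h

lemma Qpoly_monic [Nontrivial R] (m : ℕ) (hm : 1 ≤ m) : (Qpoly a m).Monic :=
  monic_of_natDegree_le_of_coeff_eq_one m (Qpoly_natDegree_le a m) (Qpoly_coeff_top a m hm)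

lemma Qpoly_natDegree [Nontrivial R] (m : ℕ) (hm : 1 ≤ m) : (Qpoly a m).natDegree = m :=
  le_antisymm (Qpoly_natDegree_le a m)
    (le_natDegree_of_ne_zero (by rw [Qpoly_coeff_top a m hm]; exact one_ne_zero))

end Q

-- product reversal lemma
lemma prod_Ioi_rev {M : Type*} [CommMonoid M] {n : ℕ} (g : Fin n → Fin n → M) :
    (∏ i : Fin n, ∏ j ∈ Finset.Ioi i, g (Fin.rev j) (Fin.rev i))
      = ∏ i : Fin n, ∏ j ∈ Finset.Ioi i, g i j := by
  have step1 : ∀ i : Fin n, (∏ j ∈ Finset.Ioi i, g (Fin.rev j) (Fin.rev i))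
      = ∏ j ∈ Finset.Iio (Fin.rev i), g j (Fin.rev i) := by
    intro i
    refine Finset.prod_nbij' Fin.rev Fin.rev ?_ ?_ ?_ ?_ ?_ <;>
      simp [Fin.rev_lt_rev, Fin.lt_rev_iff]
  simp_rw [step1]
  rw [← Equiv.prod_comp Fin.revPerm.symm (fun i => ∏ j ∈ Finset.Iio (Fin.rev i), g j (Fin.rev i))]
  simp only [Fin.revPerm_symm, Fin.revPerm_apply, Fin.rev_rev]
  exact Finset.prod_comm' (by simp)

end Aux

/-- even orthogonal factorial denominator identity. -/
theorem factorial_eo_denominator {R : Type*} [CommRing R] (n : ℕ) (hn : 1 ≤ n)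
    (x : Fin n → Rˣ) (a : ℕ → R) :
    Matrix.det (Matrix.of fun i j : Fin n =>
        facpow ((x i : R)) a (n - 1 - (j : ℕ))
          + facpow ((((x i)⁻¹ : Rˣ) : R)) a (n - 1 - (j : ℕ))) =
      2 * ∏ i : Fin n, ∏ j ∈ Finset.Ioi i,
          ((x i : R) + (((x i)⁻¹ : Rˣ) : R) - (x j : R) - (((x j)⁻¹ : Rˣ) : R)) := by
  nontriviality R
  set y : Fin n → R := fun i => (x i : R) + (((x i)⁻¹ : Rˣ) : R) with hy
  have hinv : ∀ i : Fin n, (x i : R) * (((x i)⁻¹ : Rˣ) : R) = 1 := fun i => Units.mul_inv (x i)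
  have hrev : ∀ j : Fin n, ((Fin.rev j : Fin n) : ℕ) = n - 1 - (j : ℕ) := fun j => by
    rw [Fin.val_rev]; omega
  have hM : (Matrix.of fun i j : Fin n =>
        facpow ((x i : R)) a (n - 1 - (j : ℕ))
          + facpow ((((x i)⁻¹ : Rˣ) : R)) a (n - 1 - (j : ℕ))) =
      (Matrix.of fun i j : Fin n =>
        (Qpoly a (j : ℕ)).eval (y (Fin.rev i))).submatrix Fin.revPerm Fin.revPerm := by
    ext i j
    simp only [Matrix.submatrix_apply, Matrix.of_apply, Fin.revPerm_apply, Fin.rev_rev]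
    rw [Qpoly_eval a _ _ _ (hinv i), hrev j]
  rw [hM, Matrix.det_submatrix_equiv_self,
    Matrix.eval_matrixOfPolynomials_eq_vandermonde_mul_matrixOfPolynomials
      (fun i => y (Fin.rev i)) (fun j : Fin n => Qpoly a (j : ℕ))
      (fun j => Qpoly_natDegree_le a (j : ℕ)),
    Matrix.det_mul, Matrix.det_vandermonde]
  have hC : (Matrix.of fun i j : Fin n => (Qpoly a (j : ℕ)).coeff (i : ℕ)).det = 2 := by
    rw [Matrix.det_of_upperTriangular (by
      intro i j hij
      simp only [Matrix.of_apply]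
      exact Polynomial.coeff_eq_zero_of_natDegree_lt
        (lt_of_le_of_lt (Qpoly_natDegree_le a (j : ℕ)) hij))]
    rw [Finset.prod_eq_single (⟨0, hn⟩ : Fin n)]
    · simp only [Matrix.diag_apply, Matrix.of_apply, Qpoly_zero]
      simp [Polynomial.coeff_C]
    · intro b _ hb
      simp only [Matrix.diag_apply, Matrix.of_apply]
      exact Qpoly_coeff_top a (b : ℕ) (by
        have : (b : ℕ) ≠ 0 := fun h => hb (Fin.ext h)
        omega)
    · intro h; exact absurd (Finset.mem_univ _) h
  rw [hC]
  have hprod := prod_Ioi_rev (fun p q : Fin n => y p - y q)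
  rw [show (∏ i : Fin n, ∏ j ∈ Finset.Ioi i, (y (Fin.rev j) - y (Fin.rev i)))
      = ∏ i : Fin n, ∏ j ∈ Finset.Ioi i, (y i - y j) from hprod]
  rw [mul_comm]
  congr 1
  refine Finset.prod_congr rfl fun i _ => Finset.prod_congr rfl fun j _ => ?_
  simp only [hy]
  ring
end

section
/- Let R be a commutative ring, let x ∈ R, let a = (a_1, a_2, …) be a sequence in R, and let m ≥ 0 be an integer. Then h^{gl}_m((x)|a) = (x|a)^m; that is, the coefficient of t^m in the formal power series (1−tx)^{−1} · ∏_{j=1}^{m}(1+t a_j) in R[[t]] equals the factorial power (x+a_1)(x+a_2)⋯(x+a_m). -/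
open Finset

lemma hgl_one_variable_aux {R : Type*} [CommRing R] (x : R) (a : ℕ → R) (m : ℕ) :
    ∀ k, m ≤ k →
      PowerSeries.coeff k (geom x * ∏ j ∈ Finset.range m, lin (a (j + 1))) =
        x ^ (k - m) * facpow x a m := by
  induction m with
  | zero =>
    intro k _
    simp [geom, facpow, PowerSeries.coeff_mk]
  | succ m ih =>
    intro k hk
    rw [Finset.prod_range_succ, ← mul_assoc]
    have hk' : m ≤ k - 1 := by omega
    have hk1 : k = (k - 1) + 1 := by omega
    set f := geom x * ∏ j ∈ Finset.range m, lin (a (j + 1)) with hf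
    have hcoeff : PowerSeries.coeff k (f * lin (a (m + 1))) =
        PowerSeries.coeff k f + a (m + 1) * PowerSeries.coeff (k - 1) f := by
      rw [lin, mul_add, mul_one, map_add]
      congr 1
      rw [show PowerSeries.C (a (m+1)) * PowerSeries.X
            = PowerSeries.X * PowerSeries.C (a (m+1)) from mul_comm _ _,
          ← mul_assoc, mul_comm f PowerSeries.X, mul_assoc, hk1,
          PowerSeries.coeff_succ_X_mul]
      rw [PowerSeries.coeff_mul_C, Nat.add_sub_cancel]
      ring
    rw [hcoeff, ih k (by omega), ih (k - 1) hk']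
    simp only [facpow, Finset.prod_range_succ]
    have h1 : k - m = (k - (m + 1)) + 1 := by omega
    have h2 : k - 1 - m = k - (m + 1) := by omega
    rw [h1, h2]
    ring

/-- one-variable `h^gl` is a factorial power. -/
theorem hgl_one_variable {R : Type*} [CommRing R] (x : R) (a : ℕ → R) (m : ℕ) :
    PowerSeries.coeff m (geom x * ∏ j ∈ Finset.range m, lin (a (j + 1))) =
      facpow x a m := by
  simpa using hgl_one_variable_aux x a m m le_rfl
end

section
/- Let R be a commutative ring, let x be an invertible element of R with x̄ := x^{−1}, let a = (a_1, a_2, …) be a sequence in R, and let m ≥ 0 be an integer. Then (x − x̄) · h^{sp}_m((x),(x̄)|a) = x·(x|a)^m − x̄·(x̄|a)^m. -/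
open Finset

section Aux
variable {R : Type*} [CommRing R]

lemma key_geom (x y : R) :
    PowerSeries.C (x - y) * (geom x * geom y) =
      PowerSeries.C x * geom x - PowerSeries.C y * geom y := by
  ext k
  rw [PowerSeries.coeff_C_mul, map_sub, PowerSeries.coeff_C_mul, PowerSeries.coeff_C_mul,
    PowerSeries.coeff_mul]
  simp only [geom, PowerSeries.coeff_mk]
  rw [Finset.Nat.sum_antidiagonal_eq_sum_range_succ_mk]
  have h := geom_sum₂_mul x y (k + 1)
  simp only [Nat.add_sub_cancel] at h
  rw [mul_comm, h]
  ring

lemma geom_rec (x : R) :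
    geom x = 1 + PowerSeries.C x * PowerSeries.X * geom x := by
  ext k
  cases k with
  | zero => simp [geom]
  | succ n =>
    rw [map_add, mul_assoc, PowerSeries.coeff_C_mul, PowerSeries.coeff_succ_X_mul]
    simp [geom, pow_succ, mul_comm]

lemma coeff_succ_mul_lin (b : R) (f : PowerSeries R) (k : ℕ) :
    PowerSeries.coeff (k + 1) (f * lin b) =
      PowerSeries.coeff (k + 1) f + b * PowerSeries.coeff k f := by
  rw [lin, mul_add, mul_one, map_add,
    show f * (PowerSeries.C b * PowerSeries.X) = PowerSeries.C b * (PowerSeries.X * f) by ring,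
    PowerSeries.coeff_C_mul, PowerSeries.coeff_succ_X_mul]

lemma coeff_prod_lin_eq_zero (a : ℕ → R) :
    ∀ m k, m < k → PowerSeries.coeff k (∏ j ∈ Finset.range m, lin (a (j + 1))) = 0 := by
  intro m
  induction m with
  | zero => intro k hk; simp [PowerSeries.coeff_one]; omega
  | succ m ih =>
    intro k hk
    obtain ⟨k', rfl⟩ : ∃ k', k = k' + 1 := ⟨k - 1, by omega⟩
    rw [Finset.prod_range_succ, coeff_succ_mul_lin, ih (k' + 1) (by omega), ih k' (by omega)]
    ring

lemma coeff_geom_prod_lin (x : R) (a : ℕ → R) (m : ℕ) :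
    PowerSeries.coeff m (geom x * ∏ j ∈ Finset.range m, lin (a (j + 1))) = facpow x a m := by
  induction m with
  | zero => simp [geom, facpow]
  | succ m ih =>
    rw [Finset.prod_range_succ, ← mul_assoc, coeff_succ_mul_lin, ih]
    conv_lhs => rw [geom_rec x]
    rw [add_mul, one_mul, map_add, coeff_prod_lin_eq_zero a m (m + 1) (by omega), zero_add,
      show PowerSeries.C x * PowerSeries.X * geom x * ∏ j ∈ Finset.range m, lin (a (j + 1)) =
        PowerSeries.C x * (PowerSeries.X * (geom x * ∏ j ∈ Finset.range m, lin (a (j + 1))))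
        by ring,
      PowerSeries.coeff_C_mul, PowerSeries.coeff_succ_X_mul, ih]
    simp only [facpow, Finset.prod_range_succ]
    ring

end Aux

/-- one-variable `h^sp`. -/
theorem hsp_one_variable {R : Type*} [CommRing R] (x : Rˣ) (a : ℕ → R) (m : ℕ) :
    ((x : R) - ((x⁻¹ : Rˣ) : R)) * hsp (fun _ : Fin 1 => x) a (m : ℤ) =
      (x : R) * facpow ((x : R)) a m - ((x⁻¹ : Rˣ) : R) * facpow (((x⁻¹ : Rˣ) : R)) a m := by
  have h : hsp (fun _ : Fin 1 => x) a (m : ℤ) =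
      PowerSeries.coeff m ((geom ((x : R)) * geom (((x⁻¹ : Rˣ) : R))) *
        ∏ j ∈ Finset.range m, lin (a (j + 1))) := by
    simp [hsp, Fin.prod_univ_one]
  rw [h, ← PowerSeries.coeff_C_mul, ← mul_assoc, key_geom, sub_mul, map_sub,
    mul_assoc, mul_assoc, PowerSeries.coeff_C_mul, PowerSeries.coeff_C_mul,
    coeff_geom_prod_lin, coeff_geom_prod_lin]
end

section
/- Let R be a commutative ring, let x be an invertible element of R with x̄ := x^{−1}, let a = (a_1, a_2, …) be a sequence in R, and let m ≥ 0 be an integer. Then (x − 1) · h^{oo}_m((x),(x̄)|a) = x·(x|a)^m − (x̄|a)^m. (This is the one-variable case of the paper's identity (x^{1/2} − x̄^{1/2})·h^{oo}_m = x^{1/2}(x|a)^m − x̄^{1/2}(x̄|a)^m, cleared of half-integer powers by multiplying through by x^{1/2}.) -/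
open Finset

lemma one_sub_mul_geom {R : Type*} [CommRing R] (y : R) :
    (1 - PowerSeries.C y * PowerSeries.X) * geom y = 1 := by
  ext k
  cases k with
  | zero => simp [geom]
  | succ n =>
    rw [sub_mul, one_mul, mul_assoc, map_sub, PowerSeries.coeff_C_mul,
      PowerSeries.coeff_succ_X_mul]
    simp [geom, pow_succ, mul_comm]

lemma geom_mul_prod_lin {R : Type*} [CommRing R] (y : R) (a : ℕ → R) (m k : ℕ) :
    PowerSeries.coeff (m + k)
      (geom y * ∏ j ∈ Finset.range m, lin (a (j + 1))) = y ^ k * facpow y a m := by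
  induction m generalizing k with
  | zero => simp [geom, facpow]
  | succ m ih =>
    rw [Finset.prod_range_succ, ← mul_assoc, lin, mul_add, mul_one, map_add]
    have h1 : m + 1 + k = (m + k) + 1 := by omega
    rw [h1]
    rw [show (geom y * ∏ j ∈ Finset.range m, lin (a (j+1))) *
        (PowerSeries.C (a (m+1)) * PowerSeries.X)
      = PowerSeries.C (a (m+1)) *
        ((geom y * ∏ j ∈ Finset.range m, lin (a (j+1))) * PowerSeries.X) by ring]
    rw [PowerSeries.coeff_C_mul, PowerSeries.coeff_succ_mul_X,
      show (m + k) + 1 = m + (k+1) by omega, ih (k+1), ih k]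
    simp only [facpow, Finset.prod_range_succ]
    ring

lemma key_series {R : Type*} [CommRing R] (x : Rˣ) :
    PowerSeries.C ((x : R) - 1) *
      ((1 + PowerSeries.X) * (geom ((x : R)) * geom (((x⁻¹ : Rˣ) : R)))) =
    PowerSeries.C (x : R) * geom ((x : R)) - geom (((x⁻¹ : Rˣ) : R)) := by
  have h1 := one_sub_mul_geom (R := R) (x : R)
  have h2 := one_sub_mul_geom (R := R) ((x⁻¹ : Rˣ) : R)
  have hx : PowerSeries.C (x : R) * PowerSeries.C ((x⁻¹ : Rˣ) : R) = 1 := by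
    rw [← map_mul]; simp
  rw [map_sub, map_one]
  linear_combination (PowerSeries.C (x : R) * geom ((x : R))) * h2 -
    geom (((x⁻¹ : Rˣ) : R)) * h1 +
    (PowerSeries.X * geom ((x : R)) * geom (((x⁻¹ : Rˣ) : R))) * hx

/-- one-variable `h^oo`. -/
theorem hoo_one_variable {R : Type*} [CommRing R] (x : Rˣ) (a : ℕ → R) (m : ℕ) :
    ((x : R) - 1) * hoo (fun _ : Fin 1 => x) a (m : ℤ) =
      (x : R) * facpow ((x : R)) a m - facpow (((x⁻¹ : Rˣ) : R)) a m := by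
  simp only [hoo]
  rw [if_pos (by positivity), Int.toNat_natCast]
  simp only [Fin.prod_univ_one, Nat.add_sub_cancel_left]
  rw [← PowerSeries.coeff_C_mul, ← mul_assoc, key_series, sub_mul, map_sub, mul_assoc, PowerSeries.coeff_C_mul,
    ]
  have g1 := geom_mul_prod_lin (R := R) ((x : R)) a m 0
  have g2 := geom_mul_prod_lin (R := R) (((x⁻¹ : Rˣ) : R)) a m 0
  simp only [Nat.add_zero, pow_zero, one_mul] at g1 g2
  rw [g1, g2]
end

section
/- Let R be a commutative ring, let k ≥ 2, let x_1, …, x_k ∈ R, let a = (a_1, a_2, …) be a sequence in R, and let m be any integer. Then h^{gl}_m((x_1,…,x_{k−1})|a) − h^{gl}_m((x_2,…,x_k)|a) = (x_1 − x_k) · h^{gl}_{m−1}((x_1,…,x_k)|a). -/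
open Finset

private lemma geom_mul_inv' {R : Type*} [CommRing R] (x : R) :
    geom x * (1 - PowerSeries.C x * PowerSeries.X) = 1 := by
  ext n
  cases n with
  | zero => simp [geom]
  | succ n =>
    have : geom x * (1 - PowerSeries.C x * PowerSeries.X)
        = geom x - (PowerSeries.C x * geom x) * PowerSeries.X := by ring
    rw [this, map_sub, PowerSeries.coeff_succ_mul_X, PowerSeries.coeff_C_mul]
    simp [geom, pow_succ, mul_comm]

/-- recurrence relation for `h^gl`. -/
theorem hgl_recurrence {R : Type*} [CommRing R] (k : ℕ) (hk : 2 ≤ k)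
    (x : Fin k → R) (a : ℕ → R) (m : ℤ) :
    hgl (fun i : Fin (k - 1) => x ⟨(i : ℕ), by have := i.isLt; omega⟩) a m
      - hgl (fun i : Fin (k - 1) => x ⟨(i : ℕ) + 1, by have := i.isLt; omega⟩) a m =
    (x ⟨0, by omega⟩ - x ⟨k - 1, by omega⟩) * hgl x a (m - 1) := by
  obtain ⟨n, rfl⟩ : ∃ n, k = n + 2 := ⟨k - 2, by omega⟩
  set x0 : R := x ⟨0, by omega⟩ with hx0
  set xl : R := x ⟨n + 2 - 1, by omega⟩ with hxl
  set A : PowerSeries R := ∏ i : Fin (n + 2 - 1), geom (x ⟨(i : ℕ), by have := i.isLt; omega⟩)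
    with hA
  set B : PowerSeries R := ∏ i : Fin (n + 2 - 1), geom (x ⟨(i : ℕ) + 1, by have := i.isLt; omega⟩)
    with hB
  set F : PowerSeries R := ∏ i : Fin (n + 2), geom (x i) with hF
  have hF1 : F = A * geom xl := by
    rw [hF, Fin.prod_univ_castSucc, hA]
    rfl
  have hF2 : F = geom x0 * B := by
    rw [hF, Fin.prod_univ_succ, hB]
    rfl
  have hAF : A = F * (1 - PowerSeries.C xl * PowerSeries.X) := by
    rw [hF1, mul_assoc, geom_mul_inv', mul_one]
  have hBF : B = F * (1 - PowerSeries.C x0 * PowerSeries.X) := by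
    rw [hF2, mul_comm (geom x0) B, mul_assoc, geom_mul_inv', mul_one]
  have key : A - B = PowerSeries.C (x0 - xl) * (PowerSeries.X * F) := by
    rw [hAF, hBF, map_sub]
    ring
  by_cases hm : 1 ≤ m
  · obtain ⟨q, rfl⟩ : ∃ q : ℕ, m = (q : ℤ) + 1 := ⟨(m - 1).toNat, by omega⟩
    have ht1 : ((q : ℤ) + 1).toNat = q + 1 := by omega
    have ht2 : ((q : ℤ) + 1 - 1).toNat = q := by omega
    have hr1 : (n + 2 - 1) + (q + 1) - 1 = n + q + 1 := by omega
    have hr2 : (n + 2) + q - 1 = n + q + 1 := by omega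
    rw [hgl, hgl, hgl, if_pos (by omega : (0:ℤ) ≤ (q:ℤ) + 1),
      if_pos (by omega : (0:ℤ) ≤ (q:ℤ) + 1 - 1), ht1, ht2, hr1, hr2,
      if_pos (by omega : (0:ℤ) ≤ (q:ℤ) + 1)]
    rw [← map_sub, ← sub_mul, key, mul_assoc, PowerSeries.coeff_C_mul, mul_assoc,
      PowerSeries.coeff_succ_X_mul]
  · by_cases hm0 : m = 0
    · subst hm0
      rw [hgl, hgl, hgl, if_pos le_rfl, if_pos le_rfl, if_neg (by omega : ¬ (0:ℤ) ≤ 0 - 1)]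
      rw [← map_sub, ← sub_mul]
      simp only [Int.toNat_zero]
      rw [PowerSeries.coeff_zero_eq_constantCoeff, map_mul, map_sub]
      have hcA : PowerSeries.constantCoeff A = 1 := by
        rw [hA, map_prod]
        simp [geom, PowerSeries.constantCoeff_mk]
      have hcB : PowerSeries.constantCoeff B = 1 := by
        rw [hB, map_prod]
        simp [geom, PowerSeries.constantCoeff_mk]
      rw [hcA, hcB]
      ring
    · rw [hgl, hgl, hgl, if_neg (by omega : ¬ (0:ℤ) ≤ m), if_neg (by omega : ¬ (0:ℤ) ≤ m - 1),
        if_neg (by omega : ¬ (0:ℤ) ≤ m)]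
      ring
end

section
/- (Flagged Jacobi–Trudi identity, general linear case.) Let n ≥ 1, let R be a commutative ring, let x_1, …, x_n ∈ R, let a = (a_1, a_2, …) be a sequence in R, and let λ = (λ_1 ≥ … ≥ λ_n ≥ 0) be a partition with at most n parts. Then det_{1≤i,j≤n} ( (x_i|a)^{λ_j+n−j} ) = ∏_{1≤i<j≤n}(x_i − x_j) · det_{1≤i,j≤n} ( h^{gl}_{λ_j−j+i}(x^{(i)}|a) ), where x^{(i)} := (x_i, x_{i+1}, …, x_n). -/
open Finset

namespace JTGLaux

open Finset

variable {R : Type*} [CommRing R]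

noncomputable def PP (a : ℕ → R) (s : ℕ) : PowerSeries R := ∏ j ∈ Finset.range s, lin (a (j+1))

noncomputable def GG (x : ℕ → R) (N : ℕ) : PowerSeries R := ∏ j ∈ Finset.range N, geom (x j)

noncomputable def HH (x a : ℕ → R) (N : ℕ) (m : ℤ) : R :=
  if 0 ≤ m then PowerSeries.coeff m.toNat (GG x N * PP a (N + m.toNat - 1)) else 0

lemma geom_eq (x : R) : geom x = 1 + (PowerSeries.C x * PowerSeries.X) * geom x := by
  ext k
  cases k with
  | zero => simp [geom]
  | succ k =>
    rw [map_add, PowerSeries.coeff_one, mul_assoc, PowerSeries.coeff_C_mul,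
      PowerSeries.coeff_succ_X_mul]
    simp [geom, pow_succ, mul_comm]

lemma coeff_PP_of_lt (a : ℕ → R) {s m : ℕ} (h : s < m) :
    PowerSeries.coeff m (PP a s) = 0 := by
  induction s generalizing m with
  | zero =>
    have : m ≠ 0 := by omega
    simp [PP, PowerSeries.coeff_one, this]
  | succ s ih =>
    obtain ⟨m, rfl⟩ : ∃ m', m = m' + 1 := ⟨m - 1, by omega⟩
    rw [PP, Finset.prod_range_succ, ← PP, lin]
    rw [mul_add, mul_one, map_add, ih (by omega)]
    rw [show PP a s * (PowerSeries.C (a (s+1)) * PowerSeries.X)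
        = PowerSeries.C (a (s+1)) * (PowerSeries.X * PP a s) by ring]
    rw [PowerSeries.coeff_C_mul, PowerSeries.coeff_succ_X_mul, ih (by omega)]
    simp

lemma constantCoeff_PP (a : ℕ → R) (s : ℕ) : PowerSeries.constantCoeff (PP a s) = 1 := by
  rw [PP, map_prod]
  refine Finset.prod_eq_one fun j _ => ?_
  simp [lin]

lemma constantCoeff_GG (x : ℕ → R) (N : ℕ) : PowerSeries.constantCoeff (GG x N) = 1 := by
  rw [GG, map_prod]
  refine Finset.prod_eq_one fun j _ => ?_
  simp [geom, ← PowerSeries.coeff_zero_eq_constantCoeff]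

lemma HH_zero (x a : ℕ → R) (N : ℕ) : HH x a N 0 = 1 := by
  simp only [HH, if_pos le_rfl, Int.toNat_zero, PowerSeries.coeff_zero_eq_constantCoeff,
    map_mul, constantCoeff_PP, constantCoeff_GG, one_mul]

lemma HH_neg (x a : ℕ → R) (N : ℕ) {m : ℤ} (hm : m < 0) : HH x a N m = 0 := by
  simp [HH, not_le.mpr hm]

lemma HH_zero_var (x a : ℕ → R) {m : ℤ} (hm : 1 ≤ m) : HH x a 0 m = 0 := by
  rw [HH, if_pos (by omega)]
  have hG : GG x 0 = 1 := by simp [GG]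
  rw [hG, one_mul]
  exact coeff_PP_of_lt a (by omega)

lemma HH_rec (x a : ℕ → R) (N : ℕ) (m : ℤ) :
    HH x a (N+1) m
      = HH (fun j => x (j+1)) a N m + (x 0 + a (N + m.toNat)) * HH x a (N+1) (m-1) := by
  rcases lt_trichotomy m 0 with h | h | h
  · rw [HH_neg _ _ _ h, HH_neg _ _ _ h, HH_neg _ _ _ (by omega), mul_zero, add_zero]
  · subst h
    rw [HH_zero, HH_zero, HH_neg _ _ _ (by omega), mul_zero, add_zero]
  · obtain ⟨k, rfl⟩ : ∃ k : ℕ, m = (k : ℤ) + 1 := ⟨(m - 1).toNat, by omega⟩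
    have h1 : ((k : ℤ) + 1).toNat = k + 1 := by omega
    have h2 : ((k : ℤ) + 1 - 1).toNat = k := by omega
    rw [HH, HH, HH, if_pos (by omega), if_pos (by omega), if_pos (by omega), h1, h2]
    have e1 : N + 1 + (k + 1) - 1 = (N + k) + 1 := by omega
    have e2 : N + (k + 1) - 1 = N + k := by omega
    have e3 : N + 1 + k - 1 = N + k := by omega
    rw [e1, e2, e3]
    set A := GG x (N+1) with hA
    set B := GG (fun j => x (j+1)) N with hB
    set Q := PP a (N+k) with hQ
    set c := a (N + k + 1) with hc
    have hG2 : A = B + (PowerSeries.C (x 0) * PowerSeries.X) * A := by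
      have hsplit : A = B * geom (x 0) := by
        rw [hA, hB, GG, GG, prod_range_succ']
      nth_rewrite 1 [hsplit]
      nth_rewrite 1 [geom_eq (x 0)]
      rw [hsplit]; ring
    have hAQ : A * Q = B * Q
        + PowerSeries.C (x 0) * (PowerSeries.X * (A * Q)) := by
      nth_rewrite 1 [hG2]; ring
    have hPs : PP a (N + k + 1) = Q * lin c := by
      rw [hQ, PP, PP, prod_range_succ, hc]
    have expand : A * PP a (N + k + 1) = B * Q
        + PowerSeries.C (x 0) * (PowerSeries.X * (A * Q))
        + PowerSeries.C c * (PowerSeries.X * (A * Q)) := by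
      rw [hPs]
      calc A * (Q * lin c)
          = A * Q + PowerSeries.C c * (PowerSeries.X * (A * Q)) := by rw [lin]; ring
        _ = _ := by nth_rewrite 1 [hAQ]; rfl
    simp only [expand, map_add, PowerSeries.coeff_C_mul, PowerSeries.coeff_succ_X_mul]
    have : a (N + (k + 1)) = c := rfl
    rw [this]; ring

lemma key (n : ℕ) : ∀ (x a : ℕ → R) (i : ℕ), i < n → ∀ m : ℤ, 0 ≤ m + n - 1 →
    facpow (x i) a (m + n - 1).toNat
      = ∑ k ∈ Finset.range n,
          (∏ l ∈ Finset.Ico (k+1) n, (x i - x l)) * HH (fun j => x (k + j)) a (n - k) (m + k) := by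
  induction n with
  | zero => intro x a i hi; omega
  | succ n ih =>
    intro x a i hi m hm
    rcases i with _ | i
    · suffices aux : ∀ (p : ℕ) (m : ℤ), m + n = p →
          facpow (x 0) a p
            = ∑ k ∈ Finset.range (n+1),
                (∏ l ∈ Finset.Ico (k+1) (n+1), (x 0 - x l))
                  * HH (fun j => x (k + j)) a (n + 1 - k) (m + k) by
        have hT : (m + ((n+1:ℕ):ℤ) - 1).toNat = (m + (n:ℤ)).toNat := by push_cast; omega
        rw [hT]
        exact aux (m + (n:ℤ)).toNat m (by omega)
      intro p
      induction p with
      | zero =>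
        intro m hm0
        have hLHS : facpow (x 0) a 0 = 1 := by simp [facpow]
        rw [hLHS]
        rw [Finset.sum_eq_single_of_mem n (self_mem_range_succ n)]
        · rw [Finset.Ico_self, Finset.prod_empty, one_mul,
            show m + (n:ℤ) = 0 from hm0, HH_zero]
        · intro k hk hkn
          have hk' : k < n := by
            rcases Finset.mem_range.mp hk with h; omega
          rw [HH_neg _ _ _ (by omega : m + (k:ℤ) < 0), mul_zero]
      | succ p ihp =>
        intro m hmp
        have claim : ∀ k ∈ Finset.range (n+1),
            (∏ l ∈ Finset.Ico (k+1) (n+1), (x 0 - x l)) * HH (fun j => x (k + j)) a (n + 1 - k) (m + k)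
              = (∏ l ∈ Finset.Ico (k+1) (n+1), (x 0 - x l)) *
                  (HH (fun j => x (k + j + 1)) a (n - k) (m + k)
                    + (x k + a (p+1)) * HH (fun j => x (k + j)) a (n + 1 - k) (m + k - 1)) := by
          intro k hk
          have hkn : k ≤ n := by
            have := Finset.mem_range.mp hk; omega
          congr 1
          rw [show n + 1 - k = (n - k) + 1 from by omega]
          rw [HH_rec (fun j => x (k + j)) a (n - k) (m + k)]
          by_cases h0 : (0:ℤ) ≤ m + k - 1
          · have hidx : n - k + (m + (k:ℤ)).toNat = p + 1 := by omega
            rw [hidx]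
            rfl
          · have hz : HH (fun j => x (k + j)) a (n - k + 1) (m + (k:ℤ) - 1) = 0 :=
              HH_neg _ _ _ (by omega)
            simp only [hz, mul_zero, add_zero]
            rfl
        rw [Finset.sum_congr rfl claim]
        have split : ∑ k ∈ Finset.range (n+1),
            (∏ l ∈ Finset.Ico (k+1) (n+1), (x 0 - x l)) *
              (HH (fun j => x (k + j + 1)) a (n - k) (m + k)
                + (x k + a (p+1)) * HH (fun j => x (k + j)) a (n + 1 - k) (m + k - 1))
          = (∑ k ∈ Finset.range (n+1),
              (∏ l ∈ Finset.Ico (k+1) (n+1), (x 0 - x l)) *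
                HH (fun j => x (k + j + 1)) a (n - k) (m + k))
            + ∑ k ∈ Finset.range (n+1),
              (∏ l ∈ Finset.Ico (k+1) (n+1), (x 0 - x l)) *
                ((x k + a (p+1)) * HH (fun j => x (k + j)) a (n + 1 - k) (m + k - 1)) := by
          rw [← Finset.sum_add_distrib]
          exact Finset.sum_congr rfl fun k _ => by ring
        rw [split]
        have hS1 : (∑ k ∈ Finset.range (n+1),
              (∏ l ∈ Finset.Ico (k+1) (n+1), (x 0 - x l)) *
                HH (fun j => x (k + j + 1)) a (n - k) (m + k))
            = ∑ k ∈ Finset.range (n+1),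
                (x 0 - x k) * ((∏ l ∈ Finset.Ico (k+1) (n+1), (x 0 - x l)) *
                  HH (fun j => x (k + j)) a (n + 1 - k) (m + k - 1)) := by
          rw [Finset.sum_range_succ, Finset.sum_range_succ']
          rw [Nat.sub_self, HH_zero_var _ _ (by omega : (1:ℤ) ≤ m + (n:ℤ)), mul_zero, add_zero]
          rw [sub_self, zero_mul, add_zero]
          refine Finset.sum_congr rfl fun k hk => ?_
          have hkn : k < n := Finset.mem_range.mp hk
          have hprod : (∏ l ∈ Finset.Ico (k+1) (n+1), (x 0 - x l))
              = (x 0 - x (k+1)) * ∏ l ∈ Finset.Ico (k+1+1) (n+1), (x 0 - x l) := by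
            exact Finset.prod_eq_prod_Ico_succ_bot (by omega) _
          rw [hprod]
          have hfun : (fun j => x (k + j + 1)) = (fun j => x (k + 1 + j)) := by
            funext j; congr 1; omega
          have hlev : n - k = n + 1 - (k + 1) := by omega
          have hidx2 : m + (k:ℤ) = m + (((k+1:ℕ)):ℤ) - 1 := by push_cast; ring
          rw [hfun, hlev, hidx2]
          ring
        rw [hS1, ← Finset.sum_add_distrib]
        have hmerge : ∀ k ∈ Finset.range (n+1),
            (x 0 - x k) * ((∏ l ∈ Finset.Ico (k+1) (n+1), (x 0 - x l)) *
                  HH (fun j => x (k + j)) a (n + 1 - k) (m + k - 1))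
              + (∏ l ∈ Finset.Ico (k+1) (n+1), (x 0 - x l)) *
                  ((x k + a (p+1)) * HH (fun j => x (k + j)) a (n + 1 - k) (m + k - 1))
            = (x 0 + a (p+1)) * ((∏ l ∈ Finset.Ico (k+1) (n+1), (x 0 - x l)) *
                  HH (fun j => x (k + j)) a (n + 1 - k) ((m - 1) + k)) := by
          intro k _
          rw [show m + (k:ℤ) - 1 = (m - 1) + k from by ring]
          ring
        rw [Finset.sum_congr rfl hmerge, ← Finset.mul_sum]
        rw [← ihp (m-1) (by omega)]
        rw [facpow, Finset.prod_range_succ, ← facpow]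
        ring
    · have IH := ih (fun j => x (j+1)) a i (by omega) (m+1) (by omega)
      have hexp : (m + ((n:ℕ)+1:ℕ) - 1 : ℤ).toNat = (m + 1 + n - 1).toNat := by push_cast; omega
      rw [hexp, IH]
      rw [Finset.sum_range_succ']
      have h0 : (∏ l ∈ Finset.Ico (0+1) (n+1), (x (i+1) - x l)) = 0 := by
        refine Finset.prod_eq_zero (i := i+1) ?_ (sub_self (x (i+1)))
        simp only [Finset.mem_Ico]; omega
      rw [h0, zero_mul, add_zero]
      refine Finset.sum_congr rfl fun k hk => ?_
      have hkn : k < n := Finset.mem_range.mp hk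
      have hprod : (∏ l ∈ Finset.Ico (k+1) n, (x (i+1) - x (l+1)))
          = ∏ l ∈ Finset.Ico (k+1+1) (n+1), (x (i+1) - x l) := by
        rw [Finset.prod_Ico_eq_prod_range, Finset.prod_Ico_eq_prod_range]
        rw [show n + 1 - (k + 1 + 1) = n - (k+1) from by omega]
        refine Finset.prod_congr rfl fun t _ => ?_
        congr 2
        omega
      have hfun' : (fun j => x (k + j + 1)) = (fun j => x (k + 1 + j)) := by
        funext j; congr 1; omega
      have hidx : m + 1 + (k:ℤ) = m + ((k:ℕ)+1 : ℕ) := by push_cast; ring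
      have hlev : n - k = n + 1 - (k + 1) := by omega
      calc (∏ l ∈ Finset.Ico (k+1) n, (x (i+1) - x (l+1))) *
            HH (fun j => x (k + j + 1)) a (n - k) (m + 1 + k)
          = (∏ l ∈ Finset.Ico (k+1+1) (n+1), (x (i+1) - x l)) *
            HH (fun j => x (k + 1 + j)) a (n + 1 - (k+1)) (m + ((k:ℕ)+1:ℕ)) := by
            rw [hprod, hfun', hidx, hlev]
        _ = _ := rfl

open Polynomial in
lemma detM (n : ℕ) (x : Fin n → R) :
    Matrix.det (Matrix.of fun i k : Fin n => ∏ l ∈ Finset.Ioi k, (x i - x l))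
      = ∏ i : Fin n, ∏ j ∈ Finset.Ioi i, (x i - x j) := by
  classical
  nontriviality R
  set q : Fin n → R[X] := fun j => ∏ l ∈ Finset.Ioi (Fin.rev j), (X - C (x l)) with hq
  have hmonic : ∀ j, (q j).Monic := fun j =>
    monic_prod_of_monic _ _ fun l _ => monic_X_sub_C (x l)
  have hdeg : ∀ j : Fin n, (q j).natDegree = j := by
    intro j
    rw [hq]
    rw [natDegree_prod_of_monic _ _ fun l _ => monic_X_sub_C (x l)]
    rw [Finset.sum_congr rfl fun l _ => natDegree_X_sub_C (x l), Finset.sum_const,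
      smul_eq_mul, mul_one, Fin.card_Ioi]
    have := j.isLt
    have := (Fin.rev j).isLt
    rw [Fin.val_rev]
    omega
  have hsub : (Matrix.of fun i k : Fin n => ∏ l ∈ Finset.Ioi k, (x i - x l))
      = (Matrix.of fun i j : Fin n => (q j).eval (x (Fin.rev i))).submatrix
          Fin.revPerm Fin.revPerm := by
    ext i k
    simp only [Matrix.submatrix_apply, Matrix.of_apply, hq, Fin.revPerm_apply, Fin.rev_rev]
    rw [eval_prod]
    exact Finset.prod_congr rfl fun l _ => by simp
  rw [hsub, Matrix.det_submatrix_equiv_self,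
    ← Matrix.det_eval_matrixOfPolynomials_eq_det_vandermonde (fun i => x (Fin.rev i)) q hdeg
      hmonic,
    Matrix.det_vandermonde]
  rw [Finset.prod_sigma', Finset.prod_sigma']
  refine Finset.prod_nbij' (fun p => ⟨Fin.rev p.2, Fin.rev p.1⟩)
    (fun p => ⟨Fin.rev p.2, Fin.rev p.1⟩) ?_ ?_ ?_ ?_ ?_
  · intro p hp
    simp only [Finset.mem_sigma, Finset.mem_univ, Finset.mem_Ioi, true_and] at hp ⊢
    exact Fin.rev_lt_rev.mpr hp
  · intro p hp
    simp only [Finset.mem_sigma, Finset.mem_univ, Finset.mem_Ioi, true_and] at hp ⊢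
    exact Fin.rev_lt_rev.mpr hp
  · intro p _; simp [Fin.rev_rev]
  · intro p _; simp [Fin.rev_rev]
  · intro p _; simp

lemma hgl_eq_HH (N : ℕ) (y a : ℕ → R) (m : ℤ) :
    hgl (fun t : Fin N => y t) a m = HH y a N m := by
  simp only [hgl, HH, GG, PP]
  rw [Fin.prod_univ_eq_prod_range (fun t => geom (y t)) N]

end JTGLaux

/-- flagged Jacobi-Trudi identity, general linear case. -/
theorem flagged_jacobi_trudi_gl {R : Type*} [CommRing R] (n : ℕ) (hn : 1 ≤ n)
    (x : Fin n → R) (a : ℕ → R) (lam : Fin n → ℕ) (hlam : Antitone lam) :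
    Matrix.det (Matrix.of fun i j : Fin n =>
        facpow (x i) a (lam j + (n - 1 - (j : ℕ)))) =
      (∏ i : Fin n, ∏ j ∈ Finset.Ioi i, (x i - x j)) *
        Matrix.det (Matrix.of fun i j : Fin n =>
          hgl (fun k : Fin (n - (i : ℕ)) =>
              x ⟨(i : ℕ) + (k : ℕ), by have := i.isLt; have := k.isLt; omega⟩) a
            ((lam j : ℤ) - (j : ℕ) + (i : ℕ))) := by
  classical
  have hn0 : 0 < n := hn
  set xt : ℕ → R := fun t => x ⟨t % n, Nat.mod_lt _ hn0⟩ with hxt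
  have hxt_eq : ∀ (t : ℕ) (ht : t < n), xt t = x ⟨t, ht⟩ := by
    intro t ht
    simp only [hxt]
    congr 1
    exact Fin.ext (Nat.mod_eq_of_lt ht)
  have hmat : (Matrix.of fun i j : Fin n =>
        facpow (x i) a (lam j + (n - 1 - (j : ℕ))))
      = (Matrix.of fun i k : Fin n => ∏ l ∈ Finset.Ioi k, (x i - x l)) *
        (Matrix.of fun i j : Fin n =>
          hgl (fun k : Fin (n - (i : ℕ)) =>
              x ⟨(i : ℕ) + (k : ℕ), by have := i.isLt; have := k.isLt; omega⟩) a
            ((lam j : ℤ) - (j : ℕ) + (i : ℕ))) := by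
    ext i j
    rw [Matrix.mul_apply]
    have hterm : ∀ k : Fin n,
        (Matrix.of fun i k : Fin n => ∏ l ∈ Finset.Ioi k, (x i - x l)) i k *
          (Matrix.of fun i j : Fin n =>
            hgl (fun t : Fin (n - (i : ℕ)) =>
                x ⟨(i : ℕ) + (t : ℕ), by have := i.isLt; have := t.isLt; omega⟩) a
              ((lam j : ℤ) - (j : ℕ) + (i : ℕ))) k j
        = (∏ l ∈ Finset.Ico ((k : ℕ)+1) n, (xt (i : ℕ) - xt l)) *
            JTGLaux.HH (fun t => xt ((k : ℕ) + t)) a (n - (k : ℕ))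
              ((lam j : ℤ) - (j : ℕ) + (k : ℕ)) := by
      intro k
      simp only [Matrix.of_apply]
      congr 1
      · refine Finset.prod_nbij' (fun l => (l : ℕ))
          (fun l => ⟨l % n, Nat.mod_lt _ hn0⟩) ?_ ?_ ?_ ?_ ?_
        · intro l hl
          simp only [Finset.mem_Ioi] at hl
          simp only [Finset.mem_Ico]
          exact ⟨hl, l.isLt⟩
        · intro l hl
          simp only [Finset.mem_Ico] at hl
          simp only [Finset.mem_Ioi]
          show (k : ℕ) < l % n
          rw [Nat.mod_eq_of_lt hl.2]
          omega
        · intro l hl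
          exact Fin.ext (by simp [Nat.mod_eq_of_lt l.isLt])
        · intro l hl
          simp only [Finset.mem_Ico] at hl
          simp [Nat.mod_eq_of_lt hl.2]
        · intro l hl
          simp only [Finset.mem_Ioi] at hl
          rw [hxt_eq (i : ℕ) i.isLt, hxt_eq (l : ℕ) l.isLt]
      · have hfun : (fun t : Fin (n - (k : ℕ)) =>
              x ⟨(k : ℕ) + (t : ℕ), by have := k.isLt; have := t.isLt; omega⟩)
            = (fun t : Fin (n - (k : ℕ)) => xt ((k : ℕ) + (t : ℕ))) := by
          funext t
          rw [hxt_eq ((k : ℕ) + (t : ℕ)) (by have := k.isLt; have := t.isLt; omega)]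
        rw [hfun]
        exact JTGLaux.hgl_eq_HH (n - (k : ℕ)) (fun t => xt ((k : ℕ) + t)) a _
    rw [Finset.sum_congr rfl (fun k _ => hterm k)]
    rw [Fin.sum_univ_eq_sum_range (fun k =>
      (∏ l ∈ Finset.Ico (k+1) n, (xt (i : ℕ) - xt l)) *
        JTGLaux.HH (fun t => xt (k + t)) a (n - k) ((lam j : ℤ) - (j : ℕ) + k)) n]
    rw [← JTGLaux.key n xt a (i : ℕ) i.isLt ((lam j : ℤ) - (j : ℕ))
      (by have := j.isLt; omega)]
    rw [Matrix.of_apply]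
    have hxi : xt (i : ℕ) = x i := by
      rw [hxt_eq (i : ℕ) i.isLt]
    have hexp : ((lam j : ℤ) - (j : ℕ) + n - 1).toNat = lam j + (n - 1 - (j : ℕ)) := by
      have := j.isLt
      omega
    rw [hxi, hexp]
  rw [hmat, Matrix.det_mul, JTGLaux.detM]
end

section
/- Let R be a commutative ring, let n ≥ 1, let x_1, …, x_n ∈ R, let a = (a_1, a_2, …) be a sequence in R, and let m ≥ 1 be an integer. Then h^{gl}_m((x_1,…,x_n)|a) = Σ (x_{i_1} + a_{i_1}) · (x_{i_2} + a_{i_2+1}) ⋯ (x_{i_m} + a_{i_m+m−1}), where the sum runs over all weakly increasing sequences 1 ≤ i_1 ≤ i_2 ≤ ⋯ ≤ i_m ≤ n. -/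
open Finset

lemma geom_inv {R : Type*} [CommRing R] (y : R) : geom y * (1 - PowerSeries.C y * PowerSeries.X) = 1 := by
  ext k
  rw [mul_sub, mul_one, map_sub]
  cases k with
  | zero => simp [geom, PowerSeries.coeff_zero_eq_constantCoeff]
  | succ k =>
    rw [show geom y * (PowerSeries.C y * PowerSeries.X) = PowerSeries.C y * (geom y * PowerSeries.X) by ring,
      PowerSeries.coeff_C_mul, PowerSeries.coeff_succ_mul_X]
    simp [geom, pow_succ, mul_comm]

lemma coeff_mul_lin {R : Type*} [CommRing R] (P : PowerSeries R) (b : R) (k : ℕ) :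
    PowerSeries.coeff (k+1) (P * lin b) = PowerSeries.coeff (k+1) P + b * PowerSeries.coeff k P := by
  rw [lin, mul_add, mul_one, map_add, show P * (PowerSeries.C b * PowerSeries.X) = PowerSeries.C b * (P * PowerSeries.X) by ring,
    PowerSeries.coeff_C_mul, PowerSeries.coeff_succ_mul_X]

lemma coeff_prod_lin {R : Type*} [CommRing R] (a : ℕ → R) :
    ∀ (s : Finset ℕ) (k : ℕ), s.card < k → PowerSeries.coeff k (∏ j ∈ s, lin (a j)) = 0 := by
  intro s
  induction s using Finset.induction with
  | empty =>
    intro k hk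
    rw [Finset.prod_empty, PowerSeries.coeff_one, if_neg (by omega)]
  | @insert j s hj ih =>
    intro k hk
    rw [Finset.card_insert_of_notMem hj] at hk
    obtain ⟨k', rfl⟩ : ∃ k', k = k' + 1 := ⟨k - 1, by omega⟩
    rw [Finset.prod_insert hj, mul_comm, coeff_mul_lin, ih _ (by omega), ih _ (by omega),
      mul_zero, add_zero]

lemma constcoeff_lin {R : Type*} [CommRing R] (b : R) : PowerSeries.constantCoeff (lin b) = 1 := by
  simp [lin]

lemma constcoeff_geom {R : Type*} [CommRing R] (y : R) : PowerSeries.constantCoeff (geom y) = 1 := by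
  simp [geom, ← PowerSeries.coeff_zero_eq_constantCoeff]


lemma comb_step {R : Type*} [CommRing R] (n m : ℕ) (F : ℕ → Fin (n+1) → R) :
    ∑ f ∈ Finset.univ.filter (fun f : Fin (m+1) → Fin (n+1) => ∀ k l, k ≤ l → f k ≤ f l),
        ∏ l : Fin (m+1), F (l : ℕ) (f l)
    = (∑ g ∈ Finset.univ.filter (fun g : Fin (m+1) → Fin n => ∀ k l, k ≤ l → g k ≤ g l),
        ∏ l : Fin (m+1), F (l : ℕ) ((g l).castSucc))
      + F m (Fin.last n) *
        ∑ g ∈ Finset.univ.filter (fun g : Fin m → Fin (n+1) => ∀ k l, k ≤ l → g k ≤ g l),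
          ∏ l : Fin m, F (l : ℕ) (g l) := by
  classical
  rw [← Finset.sum_filter_add_sum_filter_not
    (Finset.univ.filter (fun f : Fin (m+1) → Fin (n+1) => ∀ k l, k ≤ l → f k ≤ f l))
    (fun f => f (Fin.last m) ≠ Fin.last n)]
  congr 1
  · -- case f last ≠ last : bijection with g : Fin (m+1) → Fin n
    apply Finset.sum_bij (i := fun f hf => fun l : Fin (m+1) =>
      (f l).castPred (by
        simp only [Finset.mem_filter, Finset.mem_univ, true_and] at hf
        intro h
        exact hf.2 (le_antisymm (Fin.le_last _) (h ▸ hf.1 l (Fin.last m) (Fin.le_last l)))))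
    · intro f hf
      simp only [Finset.mem_filter, Finset.mem_univ, true_and] at hf ⊢
      intro k l hkl
      have := hf.1 k l hkl
      rwa [← Fin.castSucc_le_castSucc_iff, Fin.castSucc_castPred, Fin.castSucc_castPred]
    · intro f hf f' hf' h
      funext l
      have := congrFun h l
      simpa [← Fin.castSucc_castPred (f l), ← Fin.castSucc_castPred (f' l),
        Fin.castSucc_inj] using congrArg Fin.castSucc this
    · intro g hg
      simp only [Finset.mem_filter, Finset.mem_univ, true_and] at hg
      refine ⟨fun l => (g l).castSucc, ?_, ?_⟩
      · simp only [Finset.mem_filter, Finset.mem_univ, true_and]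
        refine ⟨fun k l hkl => Fin.castSucc_le_castSucc_iff.2 (hg k l hkl), ?_⟩
        exact Fin.ne_of_lt ((g (Fin.last m)).castSucc_lt_last)
      · funext l; simp [Fin.castPred_castSucc]
    · intro f hf
      apply Finset.prod_congr rfl
      intro l _
      rw [Fin.castSucc_castPred]
  · -- case f last = last : bijection with g : Fin m → Fin (n+1)
    rw [Finset.mul_sum]
    apply Finset.sum_bij (i := fun f _ => fun l : Fin m => f l.castSucc)
    · intro f hf
      simp only [Finset.mem_filter, Finset.mem_univ, true_and, not_not] at hf ⊢
      intro k l hkl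
      exact hf.1 k.castSucc l.castSucc (Fin.castSucc_le_castSucc_iff.2 hkl)
    · intro f hf f' hf' h
      simp only [Finset.mem_filter, Finset.mem_univ, true_and, not_not] at hf hf'
      funext l
      induction l using Fin.lastCases with
      | last => rw [hf.2, hf'.2]
      | cast l => exact congrFun h l
    · intro g hg
      simp only [Finset.mem_filter, Finset.mem_univ, true_and, not_not] at hg
      refine ⟨Fin.snoc g (Fin.last n), ?_, ?_⟩
      · simp only [Finset.mem_filter, Finset.mem_univ, true_and, not_not]
        constructor
        · intro k l hkl
          induction l using Fin.lastCases with
          | last => simp [Fin.snoc_last, Fin.le_last]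
          | cast l =>
            induction k using Fin.lastCases with
            | last =>
              have : (l.castSucc : Fin (m+1)) = Fin.last m := le_antisymm (Fin.le_last _) hkl
              simp [this]
            | cast k =>
              rw [Fin.snoc_castSucc, Fin.snoc_castSucc]
              exact hg k l (by rwa [Fin.castSucc_le_castSucc_iff] at hkl)
        · exact Fin.snoc_last _ _
      · funext l; simp [Fin.snoc_castSucc]
    · intro f hf
      simp only [Finset.mem_filter, Finset.mem_univ, true_and, not_not] at hf
      rw [Fin.prod_univ_castSucc, hf.2, mul_comm]
      simp


lemma comb_step' {R : Type*} [CommRing R] (n m : ℕ) (x : Fin (n+1) → R) (a : ℕ → R) :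
    ∑ f ∈ Finset.univ.filter (fun f : Fin (m+1) → Fin (n+1) => ∀ k l, k ≤ l → f k ≤ f l),
        ∏ l : Fin (m+1), (x (f l) + a ((f l : ℕ) + (l : ℕ) + 1))
    = (∑ g ∈ Finset.univ.filter (fun g : Fin (m+1) → Fin n => ∀ k l, k ≤ l → g k ≤ g l),
        ∏ l : Fin (m+1), (x ((g l).castSucc) + a ((g l : ℕ) + (l : ℕ) + 1)))
      + (x (Fin.last n) + a (n + m + 1)) *
        ∑ g ∈ Finset.univ.filter (fun g : Fin m → Fin (n+1) => ∀ k l, k ≤ l → g k ≤ g l),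
          ∏ l : Fin m, (x (g l) + a ((g l : ℕ) + (l : ℕ) + 1)) := by
  have h := comb_step n m (fun k i => x i + a ((i : ℕ) + k + 1))
  simp only [Fin.coe_castSucc, Fin.val_last] at h
  exact h

lemma hgl_aux {R : Type*} [CommRing R] :
    ∀ (n : ℕ) (x : Fin n → R) (a : ℕ → R) (m : ℕ),
    PowerSeries.coeff m ((∏ i, geom (x i)) * ∏ j ∈ Finset.range (n + m - 1), lin (a (j+1))) =
    ∑ f ∈ Finset.univ.filter (fun f : Fin m → Fin n => ∀ k l, k ≤ l → f k ≤ f l),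
      ∏ l : Fin m, (x (f l) + a ((f l : ℕ) + (l : ℕ) + 1)) := by
  intro n
  induction n with
  | zero =>
    intro x a m
    match m with
    | 0 => simp [Finset.univ_unique]
    | m + 1 =>
      rw [Finset.sum_eq_zero (fun f _ => (f 0).elim0)]
      rw [show (∏ i, geom (x i)) = 1 from Finset.prod_of_isEmpty _, one_mul]
      have h3 := coeff_prod_lin (R := R) (fun j => a (j+1)) (Finset.range (0 + (m+1) - 1)) (m+1)
        (by rw [Finset.card_range]; omega)
      simpa using h3
  | succ n ihn =>
    intro x a m
    induction m with
    | zero =>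
      rw [show (n + 1 + 0 - 1) = n from by omega]
      rw [PowerSeries.coeff_zero_eq_constantCoeff, map_mul, map_prod, map_prod]
      simp only [constcoeff_geom, constcoeff_lin, Finset.prod_const_one, one_mul]
      rw [Finset.filter_true_of_mem (fun f _ => fun k => k.elim0)]
      simp [Finset.univ_unique]
    | succ m ihm =>
      have hG : (∏ i : Fin (n+1), geom (x i))
          = (∏ i : Fin n, geom (x i.castSucc))
            + PowerSeries.C (x (Fin.last n)) * PowerSeries.X * (∏ i : Fin (n+1), geom (x i)) := by
        have h2 : (∏ i : Fin n, geom (x i.castSucc))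
            = (∏ i : Fin (n+1), geom (x i))
              * (1 - PowerSeries.C (x (Fin.last n)) * PowerSeries.X) := by
          rw [Fin.prod_univ_castSucc (f := fun i => geom (x i)), mul_assoc, geom_inv, mul_one]
        rw [h2]; ring
      have e1 : PowerSeries.coeff (m+1)
            ((∏ i : Fin (n+1), geom (x i)) * ∏ j ∈ Finset.range (n + m), lin (a (j+1)))
          = PowerSeries.coeff (m+1)
              ((∏ i : Fin n, geom (x i.castSucc)) * ∏ j ∈ Finset.range (n + m), lin (a (j+1)))
            + x (Fin.last n) * PowerSeries.coeff m
              ((∏ i : Fin (n+1), geom (x i)) * ∏ j ∈ Finset.range (n + m), lin (a (j+1))) := by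
        conv_lhs => rw [hG]
        rw [show ((∏ i : Fin n, geom (x i.castSucc))
                + PowerSeries.C (x (Fin.last n)) * PowerSeries.X * (∏ i : Fin (n+1), geom (x i)))
              * ∏ j ∈ Finset.range (n + m), lin (a (j+1))
            = (∏ i : Fin n, geom (x i.castSucc)) * ∏ j ∈ Finset.range (n + m), lin (a (j+1))
              + PowerSeries.C (x (Fin.last n))
                * (((∏ i : Fin (n+1), geom (x i)) * ∏ j ∈ Finset.range (n + m), lin (a (j+1)))
                  * PowerSeries.X) by ring, map_add,
          PowerSeries.coeff_C_mul, PowerSeries.coeff_succ_mul_X]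
      have ihn' := ihn (fun i => x i.castSucc) a (m+1)
      rw [show n + (m+1) - 1 = n + m from by omega] at ihn'
      have ihm' := ihm
      rw [show n + 1 + m - 1 = n + m from by omega] at ihm'
      rw [show n + 1 + (m+1) - 1 = (n + m) + 1 from by omega, Finset.prod_range_succ,
        ← mul_assoc, coeff_mul_lin, e1, ihn', ihm', comb_step' n m x a]
      ring

/-- monomial expansion of `h^gl`. -/
theorem hgl_monomial_expansion {R : Type*} [CommRing R] (n : ℕ) (hn : 1 ≤ n)
    (x : Fin n → R) (a : ℕ → R) (m : ℕ) (hm : 1 ≤ m) :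
    hgl x a (m : ℤ) =
      ∑ f ∈ Finset.univ.filter (fun f : Fin m → Fin n => ∀ k l : Fin m, k ≤ l → f k ≤ f l),
        ∏ l : Fin m, (x (f l) + a ((f l : ℕ) + (l : ℕ) + 1)) := by
  have h := hgl_aux n x a m
  rw [hgl, if_pos (by positivity), Int.toNat_natCast]
  exact h
end
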